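/- Let C be a bivariate copula admitting a tail dependence function Λ. Then Λ(u,v) = 0 for all (u,v) ∈ [0,∞)² if and only if there exist u₀ > 0 and v₀ > 0 with Λ(u₀, v₀) = 0. -/

import Mathlib

open MeasureTheory Filter Set

/-- A bivariate copula: `C : [0,1]² → [0,1]` with the grounded/marginal conditions and
the 2-increasing property. -/
def IsCopula (C : ℝ → ℝ → ℝ) : Prop :=
  (∀ u ∈ Icc (0:ℝ) 1, ∀ v ∈ Icc (0:ℝ) 1, C u v ∈ Icc (0:ℝ) 1) ∧
  (∀ u ∈ Icc (0:ℝ) 1, C u 0 = 0 ∧ C 0 u = 0 ∧ C u 1 = u ∧ C 1 u = u) ∧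
  (∀ u u' v v' : ℝ, u ∈ Icc (0:ℝ) 1 → u' ∈ Icc (0:ℝ) 1 →
    v ∈ Icc (0:ℝ) 1 → v' ∈ Icc (0:ℝ) 1 → u ≤ u' → v ≤ v' →
    0 ≤ C u' v' - C u' v - C u v' + C u v)

/-- `Λ` is the tail dependence function of `C`:
`Λ(u,v) = lim_{p↓0} C(pu,pv)/p` for every `(u,v) ∈ [0,∞)²`. -/
def HasTDF (C Λ : ℝ → ℝ → ℝ) : Prop :=
  ∀ u v : ℝ, 0 ≤ u → 0 ≤ v →
    Tendsto (fun p : ℝ => C (p * u) (p * v) / p)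
      (nhdsWithin (0:ℝ) (Ioi 0)) (nhds (Λ u v))

lemma copula_mono {C : ℝ → ℝ → ℝ} (hC : IsCopula C) {a b c d : ℝ}
    (ha : a ∈ Icc (0:ℝ) 1) (hb : b ∈ Icc (0:ℝ) 1) (hc : c ∈ Icc (0:ℝ) 1)
    (hd : d ∈ Icc (0:ℝ) 1) (hab : a ≤ b) (hcd : c ≤ d) : C a c ≤ C b d := by
  obtain ⟨h1, h2, h3⟩ := hC
  have h01 : (0:ℝ) ∈ Icc (0:ℝ) 1 := ⟨le_refl _, zero_le_one⟩
  have e1 := h3 a b 0 c ha hb h01 hc hab hc.1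
  have e2 := h3 0 b c d h01 hb hc hd hb.1 hcd
  have ga := (h2 a ha).1
  have gb := (h2 b hb).1
  have gc := (h2 c hc).2.1
  have gd := (h2 d hd).2.1
  linarith

theorem tdf_degeneracy (C Λ : ℝ → ℝ → ℝ)
    (hC : IsCopula C) (hΛ : HasTDF C Λ) :
    (∀ u v : ℝ, 0 ≤ u → 0 ≤ v → Λ u v = 0) ↔
      ∃ u₀ v₀ : ℝ, 0 < u₀ ∧ 0 < v₀ ∧ Λ u₀ v₀ = 0 := by
  constructor
  · intro h
    exact ⟨1, 1, one_pos, one_pos, h 1 1 zero_le_one zero_le_one⟩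
  · rintro ⟨u₀, v₀, hu₀, hv₀, h0⟩ u v hu hv
    -- choose scaling factor t with u ≤ t u₀, v ≤ t v₀
    obtain ⟨t, ht, htu, htv⟩ : ∃ t : ℝ, 0 < t ∧ u ≤ t * u₀ ∧ v ≤ t * v₀ := by
      refine ⟨u / u₀ + v / v₀ + 1, by positivity, ?_, ?_⟩
      · have h1 : (u / u₀) * u₀ = u := by field_simp
        have h2 : 0 ≤ v / v₀ := div_nonneg hv hv₀.le
        nlinarith
      · have h1 : (v / v₀) * v₀ = v := by field_simp
        have h2 : 0 ≤ u / u₀ := div_nonneg hu hu₀.le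
        nlinarith
    have hCmem := hC.1
    -- nonnegativity : 0 ≤ Λ u v
    have hnonneg : 0 ≤ Λ u v := by
      refine ge_of_tendsto (hΛ u v hu hv) ?_
      have hD : (0:ℝ) < u + v + 1 := by positivity
      have hδ : (0:ℝ) < 1 / (u + v + 1) := by positivity
      filter_upwards [Ioo_mem_nhdsGT_of_mem (show (0:ℝ) ∈ Ico 0 (1 / (u + v + 1)) from
        ⟨le_refl _, hδ⟩)] with p hp
      obtain ⟨hp0, hp1⟩ := hp
      have hb : p * (u + v + 1) < 1 := (lt_div_iff₀ hD).mp hp1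
      have hpu : p * u ∈ Icc (0:ℝ) 1 := by
        constructor
        · positivity
        · nlinarith [mul_nonneg hp0.le hv]
      have hpv : p * v ∈ Icc (0:ℝ) 1 := by
        constructor
        · positivity
        · nlinarith [mul_nonneg hp0.le hu]
      have := (hCmem _ hpu _ hpv).1
      positivity
    -- upper bound : Λ u v ≤ 0
    have hmap : Tendsto (fun p : ℝ => p * t) (nhdsWithin (0:ℝ) (Ioi 0))
        (nhdsWithin (0:ℝ) (Ioi 0)) := by
      apply tendsto_nhdsWithin_of_tendsto_nhds_of_eventually_within
      · have := (tendsto_id.mul_const t : Tendsto (fun p : ℝ => p * t) (nhds 0) (nhds (0 * t)))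
        simpa using this.mono_left nhdsWithin_le_nhds
      · filter_upwards [self_mem_nhdsWithin] with p hp
        exact mul_pos hp ht
    have hcomp : Tendsto (fun p : ℝ => t * (C (p * t * u₀) (p * t * v₀) / (p * t)))
        (nhdsWithin (0:ℝ) (Ioi 0)) (nhds 0) := by
      have := ((hΛ u₀ v₀ hu₀.le hv₀.le).comp hmap).const_mul t
      rw [h0] at this
      simpa [Function.comp, mul_assoc] using this
    have hle : Λ u v ≤ 0 := by
      refine le_of_tendsto_of_tendsto (hΛ u v hu hv) hcomp ?_
      have hD : (0:ℝ) < t * u₀ + t * v₀ + 1 := by positivity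
      have hδ : (0:ℝ) < 1 / (t * u₀ + t * v₀ + 1) := by positivity
      filter_upwards [Ioo_mem_nhdsGT_of_mem (show (0:ℝ) ∈ Ico 0 (1 / (t * u₀ + t * v₀ + 1)) from
        ⟨le_refl _, hδ⟩)] with p hp
      obtain ⟨hp0, hp1⟩ := hp
      have hb : p * (t * u₀ + t * v₀ + 1) < 1 := (lt_div_iff₀ hD).mp hp1
      have hptu : p * t * u₀ ∈ Icc (0:ℝ) 1 := by
        constructor
        · positivity
        · nlinarith [mul_nonneg hp0.le (mul_pos ht hv₀).le]
      have hptv : p * t * v₀ ∈ Icc (0:ℝ) 1 := by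
        constructor
        · positivity
        · nlinarith [mul_nonneg hp0.le (mul_pos ht hu₀).le]
      have hpu : p * u ∈ Icc (0:ℝ) 1 := by
        refine ⟨by positivity, ?_⟩
        have : p * u ≤ p * t * u₀ := by nlinarith
        linarith [hptu.2]
      have hpv : p * v ∈ Icc (0:ℝ) 1 := by
        refine ⟨by positivity, ?_⟩
        have : p * v ≤ p * t * v₀ := by nlinarith
        linarith [hptv.2]
      have hmono : C (p * u) (p * v) ≤ C (p * t * u₀) (p * t * v₀) :=
        copula_mono hC hpu hptu hpv hptv (by nlinarith) (by nlinarith)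
      have hpt : (0:ℝ) < p * t := mul_pos hp0 ht
      have heq : t * (C (p * t * u₀) (p * t * v₀) / (p * t))
          = C (p * t * u₀) (p * t * v₀) / p := by
        have hpne : p ≠ 0 := hp0.ne'
        have htne : t ≠ 0 := ht.ne'
        field_simp
      show C (p * u) (p * v) / p ≤ t * (C (p * t * u₀) (p * t * v₀) / (p * t))
      rw [heq]
      gcongr
    linarith
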